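/- Let A generate a C_0-semigroup on H. For h ∈ D(A*), the exponential function φ_h(x) = e^{i⟨x,h⟩} satisfies lim_{t→0+} (R_tφ_h(x) − φ_h(x))/t = [−(1/2)⟨Qh,h⟩ + i⟨A*h, x⟩] e^{i⟨x,h⟩} pointwise; if A ≠ 0 this limit is an unbounded function of x, so D(L) ∩ E_A(H) = {0}, i.e., no nonzero trigonometric polynomial with frequencies in D(A*) lies in the domain of the OU generator. -/

import Mathlib

open MeasureTheory Filter Topology
open scoped RealInnerProductSpace

variable {H : Type*} [NormedAddCommGroup H] [InnerProductSpace ℝ H] [CompleteSpace H]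
  [TopologicalSpace.SeparableSpace H] [MeasurableSpace H] [BorelSpace H]

/-- `Q_t h = ∫_0^t e^{sA} Q e^{sA*} h ds`. -/
noncomputable def QtOp (S : ℝ → H →L[ℝ] H) (Q : H →L[ℝ] H) (t : ℝ) (h : H) : H :=
  ∫ u in (0:ℝ)..t, S u (Q ((ContinuousLinearMap.adjoint (S u)) h))

/-- The function `x ↦ e^{i⟪e^{sA}x, h⟫ - ⟪Q_s h, h⟫/2}`. -/
noncomputable def ouExp (S : ℝ → H →L[ℝ] H) (Q : H →L[ℝ] H) (h : H) (s : ℝ) (x : H) : ℂ :=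
  Complex.exp (Complex.I * (⟪S s x, h⟫ : ℂ) - (⟪QtOp S Q s h, h⟫ : ℂ) / 2)

/-- `φ_a(x) = ∫_0^a e^{i⟪e^{sA}x,h⟫ - ⟪Q_s h,h⟫/2} ds`. -/
noncomputable def phiA (S : ℝ → H →L[ℝ] H) (Q : H →L[ℝ] H) (h : H) (a : ℝ) (x : H) : ℂ :=
  ∫ s in (0:ℝ)..a, ouExp S Q h s x

/-- The Ornstein–Uhlenbeck semigroup `R_t φ(x) = ∫_H φ(e^{tA}x + y) N_{Q_t}(dy)`. -/
noncomputable def ROU (S : ℝ → H →L[ℝ] H) (N : ℝ → Measure H) (t : ℝ)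
    (φ : H → ℂ) (x : H) : ℂ :=
  ∫ y, φ (S t x + y) ∂(N t)

/-- Hypotheses: `S` is a C₀-semigroup, `Q` is nonnegative symmetric, and `N t` is the
centered Gaussian measure on `H` with covariance `Q_t`, characterized by its
characteristic functional `∫ e^{i⟪y,h⟫} N_t(dy) = e^{-⟪Q_t h,h⟫/2}`. -/
def IsOUSetup (S : ℝ → H →L[ℝ] H) (Q : H →L[ℝ] H) (N : ℝ → Measure H) : Prop :=
  S 0 = ContinuousLinearMap.id ℝ H ∧
  (∀ t s : ℝ, 0 ≤ t → 0 ≤ s → S (t + s) = (S t).comp (S s)) ∧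
  (∀ x : H, ContinuousOn (fun t => S t x) (Set.Ici 0)) ∧
  (∀ x y : H, ⟪Q x, y⟫ = ⟪x, Q y⟫) ∧ (∀ x : H, 0 ≤ ⟪Q x, x⟫) ∧
  (∀ h : H, ∀ t : ℝ,
    IntervalIntegrable (fun u => S u (Q ((ContinuousLinearMap.adjoint (S u)) h)))
      MeasureTheory.volume 0 t) ∧
  (∀ t, IsProbabilityMeasure (N t)) ∧
  (∀ t : ℝ, 0 ≤ t → ∀ h : H,
    ∫ y, Complex.exp (Complex.I * (⟪y, h⟫ : ℂ)) ∂(N t) =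
      Complex.exp (-(⟪QtOp S Q t h, h⟫ : ℂ) / 2))

/-- Membership `φ ∈ D(L)` with `L φ = g` for the generator of the OU semigroup
(complex-valued version). -/
def MemDomL (S : ℝ → H →L[ℝ] H) (N : ℝ → Measure H) (φ g : H → ℂ) : Prop :=
  UniformContinuous φ ∧ (∃ C, ∀ x, ‖φ x‖ ≤ C) ∧
  UniformContinuous g ∧ (∃ C, ∀ x, ‖g x‖ ≤ C) ∧
  (∀ x, Tendsto (fun t : ℝ => (ROU S N t φ x - φ x) / (t : ℂ))
    (𝓝[>] (0:ℝ)) (𝓝 (g x))) ∧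
  (∃ C, ∀ t ∈ Set.Ioo (0:ℝ) 1, ∀ x, ‖ROU S N t φ x - φ x‖ / t ≤ C)

section AuxLemmas

variable {H : Type*} [NormedAddCommGroup H] [InnerProductSpace ℝ H] [CompleteSpace H]
  [TopologicalSpace.SeparableSpace H] [MeasurableSpace H] [BorelSpace H]

/-- For `h ∈ D(A*)`, `(S t)* h → h` as `t → 0⁺`. -/
lemma aux_adj_tendsto (S : ℝ → H →L[ℝ] H) {h Ah : H}
    (hAh : Tendsto (fun t : ℝ => t⁻¹ • ((ContinuousLinearMap.adjoint (S t)) h - h))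
      (𝓝[>] (0:ℝ)) (𝓝 Ah)) :
    Tendsto (fun t : ℝ => (ContinuousLinearMap.adjoint (S t)) h) (𝓝[>] (0:ℝ)) (𝓝 h) := by
  have ht0 : Tendsto (fun t : ℝ => t) (𝓝[>] (0:ℝ)) (𝓝 0) :=
    tendsto_id.mono_right nhdsWithin_le_nhds
  have h1 : Tendsto (fun t : ℝ =>
      t • (t⁻¹ • ((ContinuousLinearMap.adjoint (S t)) h - h)) + h)
      (𝓝[>] (0:ℝ)) (𝓝 ((0:ℝ) • Ah + h)) := ((ht0.smul hAh).add tendsto_const_nhds)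
  rw [zero_smul, zero_add] at h1
  refine h1.congr' ?_
  filter_upwards [self_mem_nhdsWithin] with t (ht : 0 < t)
  rw [smul_smul, mul_inv_cancel₀ ht.ne', one_smul, sub_add_cancel]

/-- The pointwise limit of the OU difference quotients on exponentials. -/
lemma aux_main_limit (S : ℝ → H →L[ℝ] H) (Q : H →L[ℝ] H) (N : ℝ → Measure H)
    (hOU : IsOUSetup S Q N) (h Ah : H)
    (hAh : Tendsto (fun t : ℝ => t⁻¹ • ((ContinuousLinearMap.adjoint (S t)) h - h))
      (𝓝[>] (0:ℝ)) (𝓝 Ah)) (x : H) :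
    Tendsto (fun t : ℝ =>
        (ROU S N t (fun y => Complex.exp (Complex.I * (⟪y, h⟫ : ℂ))) x -
          Complex.exp (Complex.I * (⟪x, h⟫ : ℂ))) / (t : ℂ))
      (𝓝[>] (0:ℝ))
      (𝓝 ((-(⟪Q h, h⟫ : ℂ) / 2 + Complex.I * (⟪Ah, x⟫ : ℂ)) *
        Complex.exp (Complex.I * (⟪x, h⟫ : ℂ)))) := by
  obtain ⟨hS0, hSsg, hScont, hQsym, hQpos, hQint, hNprob, hNchar⟩ := hOU
  set w : ℝ → H := fun t => (ContinuousLinearMap.adjoint (S t)) h with hw_def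
  have hw : Tendsto w (𝓝[>] (0:ℝ)) (𝓝 h) := aux_adj_tendsto S hAh
  set c : ℝ → ℝ := fun t => ⟪QtOp S Q t h, h⟫ with hc_def
  -- Step A : formula for ROU on exponentials
  have hROU : ∀ t : ℝ, 0 ≤ t →
      ROU S N t (fun y => Complex.exp (Complex.I * (⟪y, h⟫ : ℂ))) x
        = Complex.exp (Complex.I * (⟪x, w t⟫ : ℂ) - (c t : ℂ) / 2) := by
    intro t ht
    unfold ROU
    have hsplit : ∀ y : H, Complex.exp (Complex.I * (⟪S t x + y, h⟫ : ℂ))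
        = Complex.exp (Complex.I * (⟪S t x, h⟫ : ℂ)) *
          Complex.exp (Complex.I * (⟪y, h⟫ : ℂ)) := by
      intro y
      rw [← Complex.exp_add]
      congr 1
      rw [inner_add_left]
      push_cast
      ring
    simp_rw [hsplit]
    rw [MeasureTheory.integral_const_mul, hNchar t ht h, ← Complex.exp_add]
    congr 1
    have : ⟪x, w t⟫ = ⟪S t x, h⟫ := ContinuousLinearMap.adjoint_inner_right (S t) x h
    rw [this]
    ring
  -- Step B : derivative of c at 0⁺
  set L : H →L[ℝ] ℝ := (innerSL ℝ (E := H)).flip h with hL_def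
  set f : ℝ → ℝ := fun u => L (S u (Q ((ContinuousLinearMap.adjoint (S u)) h))) with hf_def
  have hfint : ∀ t : ℝ, IntervalIntegrable f MeasureTheory.volume 0 t := fun t =>
    ⟨L.integrable_comp (hQint h t).1, L.integrable_comp (hQint h t).2⟩
  have hcf : ∀ t : ℝ, c t = ∫ u in (0:ℝ)..t, f u := by
    intro t
    rw [hc_def]
    simp only [hf_def]
    rw [L.intervalIntegral_comp_comm (hQint h t)]
    rfl
  have hf0 : f 0 = ⟪Q h, h⟫ := by
    simp only [hf_def, hL_def, hS0, ContinuousLinearMap.adjoint_id,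
      ContinuousLinearMap.id_apply]
    rfl
  have hfcont : Tendsto f (𝓝[>] (0:ℝ)) (𝓝 (⟪Q h, h⟫)) := by
    have heq : ∀ u : ℝ, f u = ⟪Q (w u), w u⟫ := by
      intro u
      show ⟪S u (Q (w u)), h⟫ = ⟪Q (w u), w u⟫
      exact (ContinuousLinearMap.adjoint_inner_right (S u) (Q (w u)) h).symm
    have hcont : Continuous fun v : H => ⟪Q v, v⟫ :=
      (Q.continuous.inner continuous_id)
    exact ((hcont.tendsto h).comp hw).congr fun u => (heq u).symm
  have hF : HasDerivWithinAt (fun t => ∫ u in (0:ℝ)..t, f u) (f 0) (Set.Ici 0) 0 := by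
    refine intervalIntegral.integral_hasDerivWithinAt_right (hfint 0)
      ⟨Set.Ioc 0 1, (Ioc_mem_nhdsGT zero_lt_one : Set.Ioc (0:ℝ) 1 ∈ 𝓝[>] (0:ℝ)),
        (hfint 1).1.aestronglyMeasurable⟩ ?_
    rw [ContinuousWithinAt, hf0]
    exact hfcont
  have hcq : Tendsto (fun t => c t / t) (𝓝[>] (0:ℝ)) (𝓝 (⟪Q h, h⟫)) := by
    have hs := (hasDerivWithinAt_iff_tendsto_slope.1 hF)
    rw [Set.Ici_sdiff_left, hf0] at hs
    refine hs.congr' ?_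
    filter_upwards [self_mem_nhdsWithin] with t (ht : 0 < t)
    rw [slope_def_field, hcf t]
    simp
  -- Step C : the exponent increment
  set dd : ℝ → ℂ := fun t => Complex.I * ((⟪x, w t - h⟫ : ℝ) : ℂ) - (c t : ℂ) / 2 with hdd_def
  set Lc : ℂ := Complex.I * ((⟪x, Ah⟫ : ℝ) : ℂ) - ((⟪Q h, h⟫ : ℝ) : ℂ) / 2 with hLc_def
  have hinner : Tendsto (fun t : ℝ => ⟪x, w t - h⟫ / t) (𝓝[>] (0:ℝ)) (𝓝 (⟪x, Ah⟫)) := by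
    have hcont : Continuous fun v : H => ⟪x, v⟫ := continuous_const.inner continuous_id
    have := (hcont.tendsto Ah).comp hAh
    refine this.congr' ?_
    filter_upwards [self_mem_nhdsWithin] with t (ht : 0 < t)
    simp [Function.comp, real_inner_smul_right, div_eq_inv_mul]
    exact Or.inl rfl
  have hd1 : Tendsto (fun t : ℝ => dd t / (t : ℂ)) (𝓝[>] (0:ℝ)) (𝓝 Lc) := by
    have h1 : Tendsto (fun t : ℝ => Complex.I * ((⟪x, w t - h⟫ / t : ℝ) : ℂ)
        - ((c t / t : ℝ) : ℂ) / 2) (𝓝[>] (0:ℝ)) (𝓝 Lc) := by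
      refine Tendsto.sub (Tendsto.const_mul _ ?_) (Tendsto.div_const ?_ 2)
      · exact (Complex.continuous_ofReal.tendsto _).comp hinner
      · exact (Complex.continuous_ofReal.tendsto _).comp hcq
    refine h1.congr' ?_
    filter_upwards [self_mem_nhdsWithin] with t (ht : 0 < t)
    have htC : (t : ℂ) ≠ 0 := by exact_mod_cast ht.ne'
    simp only [hdd_def]
    push_cast
    field_simp
  have hd0 : Tendsto dd (𝓝[>] (0:ℝ)) (𝓝 0) := by
    have ht0 : Tendsto (fun t : ℝ => (t : ℂ)) (𝓝[>] (0:ℝ)) (𝓝 0) := by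
      exact (Complex.continuous_ofReal.tendsto _).comp
        (tendsto_id.mono_right nhdsWithin_le_nhds) |>.congr (fun t => rfl)
    have := ht0.mul hd1
    rw [zero_mul] at this
    refine this.congr' ?_
    filter_upwards [self_mem_nhdsWithin] with t (ht : 0 < t)
    have htC : (t : ℂ) ≠ 0 := by exact_mod_cast ht.ne'
    field_simp
  -- Step D : (exp (dd t) - 1)/t → Lc
  have hq : Tendsto (fun t : ℝ => (Complex.exp (dd t) - 1) / (t : ℂ))
      (𝓝[>] (0:ℝ)) (𝓝 Lc) := by
    have herr : Tendsto (fun t : ℝ => (Complex.exp (dd t) - 1 - dd t) / (t : ℂ))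
        (𝓝[>] (0:ℝ)) (𝓝 0) := by
      have hbound : ∀ᶠ t in 𝓝[>] (0:ℝ),
          ‖(Complex.exp (dd t) - 1 - dd t) / (t : ℂ)‖ ≤ ‖dd t / (t : ℂ)‖ * ‖dd t‖ := by
        have hsmall : ∀ᶠ t in 𝓝[>] (0:ℝ), ‖dd t‖ ≤ 1 := by
          have := hd0 (Metric.closedBall_mem_nhds (0:ℂ) zero_lt_one)
          filter_upwards [this] with t ht
          simpa [Metric.mem_closedBall, dist_eq_norm] using ht
        filter_upwards [hsmall, self_mem_nhdsWithin] with t hts (ht : 0 < t)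
        rw [norm_div, norm_div, div_mul_eq_mul_div, mul_comm]
        refine div_le_div_of_nonneg_right ?_ (by simpa using ht)
        calc ‖Complex.exp (dd t) - 1 - dd t‖ ≤ ‖dd t‖ ^ 2 := by
              simpa using Complex.norm_exp_sub_one_sub_id_le
                (by simpa using hts)
          _ = ‖dd t‖ * ‖dd t‖ := (pow_two _)
      have hg : Tendsto (fun t : ℝ => ‖dd t / (t : ℂ)‖ * ‖dd t‖) (𝓝[>] (0:ℝ))
          (𝓝 (‖Lc‖ * ‖(0:ℂ)‖)) := (hd1.norm.mul hd0.norm)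
      rw [norm_zero, mul_zero] at hg
      exact squeeze_zero_norm' hbound hg
    have := herr.add hd1
    rw [zero_add] at this
    refine this.congr ?_
    intro t
    ring
  -- Step E : conclude
  have hmain : Tendsto (fun t : ℝ =>
      Complex.exp (Complex.I * (⟪x, h⟫ : ℂ)) * ((Complex.exp (dd t) - 1) / (t : ℂ)))
      (𝓝[>] (0:ℝ)) (𝓝 (Complex.exp (Complex.I * (⟪x, h⟫ : ℂ)) * Lc)) :=
    hq.const_mul _
  have hfinal : (Complex.exp (Complex.I * (⟪x, h⟫ : ℂ)) * Lc)
      = (-(⟪Q h, h⟫ : ℂ) / 2 + Complex.I * (⟪Ah, x⟫ : ℂ)) *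
        Complex.exp (Complex.I * (⟪x, h⟫ : ℂ)) := by
    rw [hLc_def, real_inner_comm Ah x]
    ring
  rw [hfinal] at hmain
  refine hmain.congr' ?_
  filter_upwards [self_mem_nhdsWithin] with t (ht : 0 < t)
  rw [hROU t ht.le]
  have hexp : Complex.I * (⟪x, w t⟫ : ℂ) - (c t : ℂ) / 2
      = Complex.I * (⟪x, h⟫ : ℂ) + dd t := by
    simp only [hdd_def]
    rw [inner_sub_right]
    push_cast
    ring
  rw [hexp, Complex.exp_add]
  ring

/-- The limit function is unbounded when `Ah ≠ 0`. -/
lemma aux_unbounded (Q : H →L[ℝ] H) (h Ah : H) (hA : Ah ≠ 0) :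
    ¬ ∃ C : ℝ, ∀ x : H, ‖(-(⟪Q h, h⟫ : ℂ) / 2 + Complex.I * (⟪Ah, x⟫ : ℂ)) *
        Complex.exp (Complex.I * (⟪x, h⟫ : ℂ))‖ ≤ C := by
  rintro ⟨C, hC⟩
  have hAh2 : (0:ℝ) < ‖Ah‖ ^ 2 := pow_pos (norm_pos_iff.2 hA) 2
  set r : ℝ := (|C| + 1) / ‖Ah‖ ^ 2 with hr_def
  have hx := hC (r • Ah)
  have h1 : ⟪Ah, r • Ah⟫ = |C| + 1 := by
    rw [real_inner_smul_right, real_inner_self_eq_norm_sq, hr_def]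
    field_simp
  have h2 : ‖Complex.exp (Complex.I * (⟪r • Ah, h⟫ : ℂ))‖ = 1 := by
    rw [Complex.norm_exp]
    simp
  rw [norm_mul, h2, mul_one, h1] at hx
  have h3 : |C| + 1 ≤ ‖(-(⟪Q h, h⟫ : ℂ) / 2 + Complex.I * ((|C| + 1 : ℝ) : ℂ))‖ := by
    have him := Complex.abs_im_le_norm (-(⟪Q h, h⟫ : ℂ) / 2 + Complex.I * ((|C| + 1 : ℝ) : ℂ))
    have himv : (-(⟪Q h, h⟫ : ℂ) / 2 + Complex.I * ((|C| + 1 : ℝ) : ℂ)).im = |C| + 1 := by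
      simp
    rw [himv] at him
    calc |C| + 1 ≤ |(|C| + 1)| := le_abs_self _
      _ ≤ _ := him
  have := le_trans h3 hx
  have habs := le_abs_self C
  linarith

end AuxLemmas

/-- for `h ∈ D(A*)` (with `A*h = Ah`), the difference quotients of the OU
semigroup on `e^{i⟪·,h⟫}` converge pointwise to
`(-(1/2)⟪Qh,h⟫ + i⟪A*h,x⟫) e^{i⟪x,h⟫}`; if `A*h ≠ 0` this limit is unbounded in `x`,
so `e^{i⟪·,h⟫}` does not belong to the domain `D(L)` of the OU generator:
`D(L) ∩ E_A(H) = {0}`. -/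
theorem exponential_not_in_ou_domain
    (S : ℝ → H →L[ℝ] H) (Q : H →L[ℝ] H) (N : ℝ → Measure H)
    (hOU : IsOUSetup S Q N)
    (h Ah : H)
    (hAh : Tendsto (fun t : ℝ => t⁻¹ • ((ContinuousLinearMap.adjoint (S t)) h - h))
      (𝓝[>] (0:ℝ)) (𝓝 Ah)) :
    (∀ x, Tendsto (fun t : ℝ =>
        (ROU S N t (fun y => Complex.exp (Complex.I * (⟪y, h⟫ : ℂ))) x -
          Complex.exp (Complex.I * (⟪x, h⟫ : ℂ))) / (t : ℂ))
      (𝓝[>] (0:ℝ))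
      (𝓝 ((-(⟪Q h, h⟫ : ℂ) / 2 + Complex.I * (⟪Ah, x⟫ : ℂ)) *
        Complex.exp (Complex.I * (⟪x, h⟫ : ℂ))))) ∧
    (Ah ≠ 0 → ¬ ∃ C, ∀ x, ‖(-(⟪Q h, h⟫ : ℂ) / 2 + Complex.I * (⟪Ah, x⟫ : ℂ)) *
        Complex.exp (Complex.I * (⟪x, h⟫ : ℂ))‖ ≤ C) ∧
    (Ah ≠ 0 → ¬ ∃ g : H → ℂ,
      MemDomL S N (fun y => Complex.exp (Complex.I * (⟪y, h⟫ : ℂ))) g) := by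
  refine ⟨fun x => aux_main_limit S Q N hOU h Ah hAh x,
    fun hA => aux_unbounded Q h Ah hA, fun hA => ?_⟩
  rintro ⟨g, _, _, _, ⟨C, hgC⟩, hlim, _⟩
  have hg : ∀ x, g x = (-(⟪Q h, h⟫ : ℂ) / 2 + Complex.I * (⟪Ah, x⟫ : ℂ)) *
      Complex.exp (Complex.I * (⟪x, h⟫ : ℂ)) := fun x =>
    tendsto_nhds_unique (hlim x) (aux_main_limit S Q N hOU h Ah hAh x)
  exact aux_unbounded Q h Ah hA ⟨C, fun x => (hg x) ▸ hgC x⟩
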